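/- Let $A, B \in \mathbb{R}^{p\times p}$ be positive semi-definite symmetric matrices. Write $A - B = O D O^\top$ with $O$ orthogonal and $D = \operatorname{diag}(\lambda_1,\dots,\lambda_p)$, and set $D^+ = \operatorname{diag}(|\lambda_1|,\dots,|\lambda_p|)$. Then $O D^+ O^\top \preceq A + 2\|B\|_2 I_p$, i.e. $A + 2\|B\|_2 I_p - O D^+ O^\top$ is positive semi-definite. -/

import Mathlib

open Matrix

/-- The ℓ²→ℓ² operator norm of a real square matrix. -/
noncomputable def matOpNorm {p : ℕ} (M : Matrix (Fin p) (Fin p) ℝ) : ℝ :=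
  ‖Matrix.toEuclideanCLM (𝕜 := ℝ) M‖

/-- Quadratic form bound by the operator norm. -/
lemma opNorm_smul_one_sub_posSemidef {p : ℕ} (B : Matrix (Fin p) (Fin p) ℝ)
    (hB : B.IsHermitian) :
    (matOpNorm B • (1 : Matrix (Fin p) (Fin p) ℝ) - B).PosSemidef := by
  rw [Matrix.posSemidef_iff_dotProduct_mulVec]
  constructor
  · show _ = _
    rw [Matrix.conjTranspose_sub, Matrix.conjTranspose_smul, Matrix.conjTranspose_one, hB.eq]
    simp
  · intro x
    have hx : star x = x := by simp
    set c := matOpNorm B with hc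
    let y : EuclideanSpace ℝ (Fin p) := WithLp.toLp 2 x
    have key : x ⬝ᵥ (B *ᵥ x) ≤ c * (x ⬝ᵥ x) := by
      have h1 : x ⬝ᵥ (B *ᵥ x) = inner ℝ y (Matrix.toEuclideanCLM (𝕜 := ℝ) B y) := by
        simp only [y, Matrix.toEuclideanCLM_toLp]
        rw [EuclideanSpace.inner_eq_star_dotProduct]
        simp [dotProduct, mul_comm]
      have h2 : x ⬝ᵥ x = ‖y‖ ^ 2 := by
        rw [← real_inner_self_eq_norm_sq, EuclideanSpace.inner_eq_star_dotProduct]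
        simp only [dotProduct]
        rfl
      rw [h1, h2]
      calc inner ℝ y (Matrix.toEuclideanCLM (𝕜 := ℝ) B y)
          ≤ ‖y‖ * ‖Matrix.toEuclideanCLM (𝕜 := ℝ) B y‖ := by
            simpa [mul_comm] using real_inner_le_norm y (Matrix.toEuclideanCLM (𝕜 := ℝ) B y)
        _ ≤ ‖y‖ * (c * ‖y‖) := by
            exact mul_le_mul_of_nonneg_left
              ((Matrix.toEuclideanCLM (𝕜 := ℝ) B).le_opNorm y) (norm_nonneg y)
        _ = c * ‖y‖ ^ 2 := by ring
    rw [hx, Matrix.sub_mulVec, dotProduct_sub, Matrix.smul_mulVec,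
      Matrix.one_mulVec, dotProduct_smul]
    simpa using sub_nonneg.mpr key

/-- If `A, B` are psd and `A - B = O D Oᵀ` with `O` orthogonal and `D` diagonal, then
`O D⁺ Oᵀ ⪯ A + 2‖B‖₂ I`. -/
theorem stmt3 (p : ℕ) (A B : Matrix (Fin p) (Fin p) ℝ)
    (hA : A.PosSemidef) (hB : B.PosSemidef)
    (O : Matrix (Fin p) (Fin p) ℝ) (hO : O ∈ Matrix.orthogonalGroup (Fin p) ℝ)
    (lam : Fin p → ℝ) (hdec : A - B = O * Matrix.diagonal lam * Oᵀ) :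
    (A + (2 * matOpNorm B) • (1 : Matrix (Fin p) (Fin p) ℝ)
      - O * Matrix.diagonal (fun i => |lam i|) * Oᵀ).PosSemidef := by
  set c := matOpNorm B with hc
  have hc0 : 0 ≤ c := norm_nonneg _
  have hOOt : O * Oᵀ = 1 := by
    have := (Matrix.mem_orthogonalGroup_iff (Fin p) ℝ).mp hO
    simpa [Matrix.star_eq_conjTranspose, Matrix.conjTranspose_eq_transpose_of_trivial] using this
  have hOtO : Oᵀ * O = 1 := by
    have := (Matrix.mem_orthogonalGroup_iff' (Fin p) ℝ).mp hO
    simpa [Matrix.star_eq_conjTranspose, Matrix.conjTranspose_eq_transpose_of_trivial] using this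
  -- Step 1: c • 1 - B is psd
  have hcB : (c • (1 : Matrix (Fin p) (Fin p) ℝ) - B).PosSemidef :=
    opNorm_smul_one_sub_posSemidef B hB.isHermitian
  -- Step 2: diagonal lam + c • 1 is psd
  have hsum : (A - B + c • (1 : Matrix (Fin p) (Fin p) ℝ)).PosSemidef := by
    have : A - B + c • (1 : Matrix (Fin p) (Fin p) ℝ)
        = A + (c • (1 : Matrix (Fin p) (Fin p) ℝ) - B) := by abel
    rw [this]; exact hA.add hcB
  have hDc : (Matrix.diagonal lam + c • (1 : Matrix (Fin p) (Fin p) ℝ)).PosSemidef := by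
    have h2 := hsum.mul_mul_conjTranspose_same Oᵀ
    have heq : Oᵀ * (A - B + c • (1 : Matrix (Fin p) (Fin p) ℝ)) * Oᵀᴴ
        = Matrix.diagonal lam + c • (1 : Matrix (Fin p) (Fin p) ℝ) := by
      rw [Matrix.conjTranspose_eq_transpose_of_trivial, Matrix.transpose_transpose, hdec]
      rw [Matrix.mul_add, Matrix.add_mul]
      congr 1
      · calc Oᵀ * (O * Matrix.diagonal lam * Oᵀ) * O
            = (Oᵀ * O) * Matrix.diagonal lam * (Oᵀ * O) := by
              simp only [Matrix.mul_assoc]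
          _ = Matrix.diagonal lam := by rw [hOtO]; simp
      · rw [Matrix.mul_smul, Matrix.smul_mul, Matrix.mul_one, hOtO]
    rwa [heq] at h2
  have hlam : ∀ i, 0 ≤ lam i + c := by
    intro i
    have : Matrix.diagonal lam + c • (1 : Matrix (Fin p) (Fin p) ℝ)
        = Matrix.diagonal (fun i => lam i + c) := by
      rw [Matrix.smul_one_eq_diagonal, Matrix.diagonal_add]
    rw [this] at hDc
    exact Matrix.posSemidef_diagonal_iff.mp hDc i
  -- Step 3: the inner diagonal matrix
  have hf : ∀ i, 0 ≤ lam i + 2 * c - |lam i| := by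
    intro i
    rcases abs_cases (lam i) with ⟨h, _⟩ | ⟨h, _⟩ <;> have := hlam i <;> linarith
  have hd : (Matrix.diagonal (fun i => lam i + 2 * c - |lam i|)).PosSemidef :=
    Matrix.PosSemidef.diagonal hf
  have hconj := hd.mul_mul_conjTranspose_same O
  rw [Matrix.conjTranspose_eq_transpose_of_trivial] at hconj
  -- Step 4: assemble
  have key : A + (2 * c) • (1 : Matrix (Fin p) (Fin p) ℝ)
      - O * Matrix.diagonal (fun i => |lam i|) * Oᵀ
      = B + O * Matrix.diagonal (fun i => lam i + 2 * c - |lam i|) * Oᵀ := by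
    have hdiag : Matrix.diagonal (fun i => lam i + 2 * c - |lam i|)
        = Matrix.diagonal lam + (2 * c) • (1 : Matrix (Fin p) (Fin p) ℝ)
          - Matrix.diagonal (fun i => |lam i|) := by
      rw [Matrix.smul_one_eq_diagonal, Matrix.diagonal_add, ← Matrix.diagonal_sub]
    rw [hdiag, Matrix.mul_sub, Matrix.mul_add, Matrix.sub_mul, Matrix.add_mul, ← hdec]
    rw [Matrix.mul_smul, Matrix.smul_mul, Matrix.mul_one, hOOt]
    abel
  rw [key]
  exact hB.add hconj
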